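/- arXiv:1201.0534 — 6 statements merged into one kernel-verified Lean document; each statement's English description precedes it below -/
import Mathlib

section
/- Let L₁ be the matrix with rows (0,u,v), (ū,0,0), (v̄,0,0), |u|²+|v|²=1, and let g be (√2/2) times the matrix with rows (1,0,−1), (ū, √2 v, ū), (v̄, −√2 u, v̄). Then g is unitary and g⁻¹ L₁ g = J where J = diag(1,0,−1). -/
open Complex Matrix

set_option maxHeartbeats 1000000 in
/-- the gauge matrix `g` is unitary and diagonalizes `L₁`:
`g⁻¹ L₁ g = J = diag(1,0,-1)`. -/
theorem stmt4 (u v : ℂ) (huv : ‖u‖ ^ 2 + ‖v‖ ^ 2 = 1)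
    (L₁ g J : Matrix (Fin 3) (Fin 3) ℂ)
    (hL : L₁ = !![0, u, v; (starRingEnd ℂ) u, 0, 0; (starRingEnd ℂ) v, 0, 0])
    (hg : g = (Real.sqrt 2 / 2 : ℝ) •
      !![1, 0, -1;
         (starRingEnd ℂ) u, Real.sqrt 2 * v, (starRingEnd ℂ) u;
         (starRingEnd ℂ) v, -(Real.sqrt 2 * u), (starRingEnd ℂ) v])
    (hJ : J = Matrix.diagonal ![1, 0, -1]) :
    g * gᴴ = 1 ∧ gᴴ * L₁ * g = J := by
  have key : (starRingEnd ℂ) u * u + (starRingEnd ℂ) v * v = 1 := by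
    have h1 : ((Complex.normSq u : ℝ) : ℂ) + ((Complex.normSq v : ℝ) : ℂ) = 1 := by
      rw [Complex.normSq_eq_norm_sq, Complex.normSq_eq_norm_sq]
      exact_mod_cast huv
    rw [← Complex.normSq_eq_conj_mul_self, ← Complex.normSq_eq_conj_mul_self]
    exact h1
  have hs2 : ((Real.sqrt 2 : ℝ) : ℂ) ^ 2 = 2 := by
    norm_cast
    rw [Real.sq_sqrt (by norm_num : (0:ℝ) ≤ 2)]
  have hs4 : ((Real.sqrt 2 : ℝ) : ℂ) ^ 4 = 4 := by
    have : ((Real.sqrt 2 : ℝ) : ℂ) ^ 4 = (((Real.sqrt 2 : ℝ) : ℂ) ^ 2) ^ 2 := by ring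
    rw [this, hs2]; norm_num
  subst hL hg hJ
  constructor <;> ext i j <;> fin_cases i <;> fin_cases j <;>
    simp [Matrix.mul_apply, Fin.sum_univ_three, Matrix.conjTranspose_apply,
      Matrix.diagonal_apply, Matrix.one_apply] <;>
    ring_nf <;>
    simp only [hs2, hs4, Complex.conj_ofNat] <;>
    ring_nf <;>
    first
      | rfl
      | linear_combination key / 2
      | linear_combination -key / 2
      | linear_combination key
      | linear_combination -key
end

section
/- Let μ ∈ ℂ with Re μ ≠ 0 and Im μ ≠ 0, let M be a 3×3 complex matrix, and define Φ(λ) = 𝟙 + λM/(λ−μ) + λ CMC/(λ+μ) and Ψ(λ) = 𝟙 + λM†/(λ−μ*) + λ CM†C/(λ+μ*), where C = diag(1,−1,−1). If Φ(λ)Ψ(λ) = 𝟙 for all λ ∈ ℂ \ {±μ, ±μ*}, then (𝟙 + μ* M/(μ* − μ) + μ* CMC/(μ* + μ)) M† = 0. -/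
open Complex Matrix Filter Topology

/-- if the rational dressing factor `Φ` and its proposed inverse `Ψ`
satisfy `Φ(λ)Ψ(λ) = 𝟙` away from the poles `±μ, ±μ*`, then the residue condition
`(𝟙 + μ* M/(μ*-μ) + μ* CMC/(μ*+μ)) M† = 0` holds. -/
theorem stmt6 (μ : ℂ) (hre : μ.re ≠ 0) (him : μ.im ≠ 0)
    (M C : Matrix (Fin 3) (Fin 3) ℂ)
    (hC : C = Matrix.diagonal ![1, -1, -1])
    (h : ∀ l : ℂ, l ≠ μ → l ≠ -μ → l ≠ (starRingEnd ℂ) μ → l ≠ -(starRingEnd ℂ) μ →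
      ((1 : Matrix (Fin 3) (Fin 3) ℂ) + (l / (l - μ)) • M + (l / (l + μ)) • (C * M * C)) *
      ((1 : Matrix (Fin 3) (Fin 3) ℂ) + (l / (l - (starRingEnd ℂ) μ)) • Mᴴ +
        (l / (l + (starRingEnd ℂ) μ)) • (C * Mᴴ * C)) = 1) :
    ((1 : Matrix (Fin 3) (Fin 3) ℂ)
      + ((starRingEnd ℂ) μ / ((starRingEnd ℂ) μ - μ)) • M
      + ((starRingEnd ℂ) μ / ((starRingEnd ℂ) μ + μ)) • (C * M * C)) * Mᴴ = 0 := by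
  set c : ℂ := (starRingEnd ℂ) μ with hc
  have hcμ : c ≠ μ := by
    intro hcontra
    apply him
    have := congrArg Complex.im hcontra
    simp [hc, Complex.conj_im] at this
    linarith
  have hcnegμ : c ≠ -μ := by
    intro hcontra
    apply hre
    have := congrArg Complex.re hcontra
    simp [hc, Complex.conj_re] at this
    linarith
  have hc0 : c ≠ 0 := by
    intro hcontra
    apply hre
    have := congrArg Complex.re hcontra
    simpa [hc, Complex.conj_re] using this
  have hcnegc : c ≠ -c := by
    intro hcontra
    apply hc0
    have h2 : (2:ℂ) * c = 0 := by linear_combination hcontra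
    exact (mul_eq_zero.mp h2).resolve_left two_ne_zero
  -- define the functions
  set Φ : ℂ → Matrix (Fin 3) (Fin 3) ℂ := fun l =>
    (1 : Matrix (Fin 3) (Fin 3) ℂ) + (l / (l - μ)) • M + (l / (l + μ)) • (C * M * C) with hΦ
  set F : ℂ → Matrix (Fin 3) (Fin 3) ℂ := fun l =>
    Φ l * ((l - c) • (1 : Matrix (Fin 3) (Fin 3) ℂ) + l • Mᴴ
      + (l * (l - c) / (l + c)) • (C * Mᴴ * C)) with hF
  set G : ℂ → Matrix (Fin 3) (Fin 3) ℂ := fun l =>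
    (l - c) • (1 : Matrix (Fin 3) (Fin 3) ℂ) with hG
  have heq : ∀ l : ℂ, l ≠ μ → l ≠ -μ → l ≠ c → l ≠ -c → F l = G l := by
    intro l h1 h2 h3 h4
    have hlc : l - c ≠ 0 := sub_ne_zero.mpr h3
    have hlc' : l + c ≠ 0 := by
      intro hcontra; exact h4 (by linear_combination hcontra)
    have key : ((l - c) • (1 : Matrix (Fin 3) (Fin 3) ℂ) + l • Mᴴ
        + (l * (l - c) / (l + c)) • (C * Mᴴ * C))
        = (l - c) • ((1 : Matrix (Fin 3) (Fin 3) ℂ) + (l / (l - c)) • Mᴴ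
          + (l / (l + c)) • (C * Mᴴ * C)) := by
      rw [smul_add, smul_add, smul_smul, smul_smul]
      congr 2
      · field_simp
      · congr 1
        field_simp
    rw [hF, hG]
    simp only
    rw [key, mul_smul_comm, h l h1 h2 h3 h4]
  have hsub : c - μ ≠ 0 := sub_ne_zero.mpr hcμ
  have hadd : c + μ ≠ 0 := fun hx => hcnegμ (by linear_combination hx)
  have hcc : c + c ≠ 0 := fun hx => hcnegc (by linear_combination hx)
  have hΦcont : ContinuousAt Φ c := by
    rw [hΦ]
    refine (ContinuousAt.add (ContinuousAt.add continuousAt_const ?_) ?_)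
    · exact ((continuousAt_id.div (continuousAt_id.sub continuousAt_const)
        (by simpa using hsub)).smul continuousAt_const)
    · exact ((continuousAt_id.div (continuousAt_id.add continuousAt_const)
        (by simpa using hadd)).smul continuousAt_const)
  have hFcont : ContinuousAt F c := by
    rw [hF]
    refine ContinuousAt.mul hΦcont (ContinuousAt.add (ContinuousAt.add ?_ ?_) ?_)
    · exact (continuousAt_id.sub continuousAt_const).smul continuousAt_const
    · exact continuousAt_id.smul continuousAt_const
    · refine ContinuousAt.smul (f := fun l => l * (l - c) / (l + c)) (g := fun _ => C * Mᴴ * C) ?_ continuousAt_const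
      exact (continuousAt_id.mul (continuousAt_id.sub continuousAt_const)).div
        (continuousAt_id.add continuousAt_const) (by simpa using hcc)
  have hGcont : ContinuousAt G c := by
    rw [hG]
    exact (continuousAt_id.sub continuousAt_const).smul continuousAt_const
  -- F and G agree eventually near c within the punctured neighborhood
  have hev : F =ᶠ[𝓝[≠] c] G := by
    have hopen : IsOpen {l : ℂ | l ≠ μ ∧ l ≠ -μ ∧ l ≠ -c} := by
      refine IsOpen.inter (isOpen_compl_singleton) (IsOpen.inter ?_ ?_) <;>
        exact isOpen_compl_singleton
    have hmem : {l : ℂ | l ≠ μ ∧ l ≠ -μ ∧ l ≠ -c} ∈ 𝓝 c :=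
      hopen.mem_nhds ⟨hcμ, hcnegμ, hcnegc⟩
    filter_upwards [nhdsWithin_le_nhds hmem, self_mem_nhdsWithin] with l hl hl'
    exact heq l hl.1 hl.2.1 hl' hl.2.2
  have hFc : F c = G c := by
    have t1 : Tendsto F (𝓝[≠] c) (𝓝 (F c)) :=
      hFcont.continuousWithinAt.tendsto
    have t2 : Tendsto G (𝓝[≠] c) (𝓝 (G c)) :=
      hGcont.continuousWithinAt.tendsto
    exact tendsto_nhds_unique (t1.congr' hev) t2
  have hGc : G c = 0 := by simp [hG]
  have hFc' : F c = c • (Φ c * Mᴴ) := by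
    rw [hF]
    simp [mul_smul_comm]
  have : c • (Φ c * Mᴴ) = 0 := by rw [← hFc', hFc, hGc]
  have hzero : Φ c * Mᴴ = 0 := by
    rcases smul_eq_zero.mp this with h' | h'
    · exact absurd h' hc0
    · exact h'
  simpa [hΦ] using hzero
end

section
/- Let κ ≠ 0 be real, C = diag(1,−1,−1), M a 3×3 complex matrix, and define Φ(λ) = 𝟙 + λ(M/(λ−iκ) + CMC/(λ+iκ)). If Φ(λ)Φ†(λ*) = 𝟙 identically in λ, then M C M† = 0; in particular, if M = |n⟩⟨m| has rank one, then ⟨m|C|m⟩ = 0, i.e. |m₁|² = |m₂|² + |m₃|². -/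
open Complex Matrix

/-- for the doublet dressing factor with imaginary poles `±iκ`,
`Φ(λ)Φ†(λ*) = 𝟙` forces `M C M† = 0`; for rank-one `M = |n⟩⟨m|` with `n ≠ 0`
this means `⟨m|C|m⟩ = 0`, i.e. `|m₁|² = |m₂|² + |m₃|²`. -/
theorem stmt7 (κ : ℝ) (hκ : κ ≠ 0)
    (M C : Matrix (Fin 3) (Fin 3) ℂ)
    (hC : C = Matrix.diagonal ![1, -1, -1])
    (Φ : ℂ → Matrix (Fin 3) (Fin 3) ℂ)
    (hΦ : Φ = fun l => (1 : Matrix (Fin 3) (Fin 3) ℂ) +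
      (l / (l - Complex.I * κ)) • M + (l / (l + Complex.I * κ)) • (C * M * C))
    (h : ∀ l : ℂ, l ≠ Complex.I * κ → l ≠ -(Complex.I * κ) →
      Φ l * (Φ ((starRingEnd ℂ) l))ᴴ = 1) :
    M * C * Mᴴ = 0 ∧
    (∀ n m : Fin 3 → ℂ, n ≠ 0 →
      M = Matrix.vecMulVec n (fun k => (starRingEnd ℂ) (m k)) →
      ‖m 0‖ ^ 2 = ‖m 1‖ ^ 2 + ‖m 2‖ ^ 2) := by
  have hIκ : (Complex.I * κ : ℂ) ≠ 0 :=
    mul_ne_zero Complex.I_ne_zero (Complex.ofReal_ne_zero.mpr hκ)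
  have hCH : Cᴴ = C := by
    rw [hC]
    ext i j
    fin_cases i <;> fin_cases j <;>
      simp [Matrix.conjTranspose_apply, Matrix.diagonal_apply]
  have hCC : C * C = 1 := by
    rw [hC]
    ext i j
    fin_cases i <;> fin_cases j <;>
      simp [Matrix.mul_apply, Fin.sum_univ_three, Matrix.one_apply, Matrix.diagonal_apply]
  have hCC2 : ∀ X : Matrix (Fin 3) (Fin 3) ℂ, C * (C * X) = X := by
    intro X; rw [← Matrix.mul_assoc, hCC, one_mul]
  -- value of Φ at a point
  have hΦval : ∀ (u v l : ℂ), l - Complex.I * κ ≠ 0 → l + Complex.I * κ ≠ 0 →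
      l = u * (l - Complex.I * κ) → l = v * (l + Complex.I * κ) →
      Φ l = 1 + u • M + v • (C * M * C) := by
    intro u v l h1 h2 hu hv
    rw [hΦ]
    simp only
    have e1 : l / (l - Complex.I * κ) = u := by rw [div_eq_iff h1]; exact hu
    have e2 : l / (l + Complex.I * κ) = v := by rw [div_eq_iff h2]; exact hv
    rw [e1, e2]
  -- value of (Φ (conj l))ᴴ, for real rational coefficients u v
  have hΦconj : ∀ (u v l : ℂ), (starRingEnd ℂ) u = u → (starRingEnd ℂ) v = v →
      l - Complex.I * κ ≠ 0 → l + Complex.I * κ ≠ 0 →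
      l = u * (l - Complex.I * κ) → l = v * (l + Complex.I * κ) →
      (Φ ((starRingEnd ℂ) l))ᴴ = 1 + v • Mᴴ + u • (C * Mᴴ * C) := by
    intro u v l hur hvr h1 h2 hu hv
    have h1' : (starRingEnd ℂ) l - Complex.I * κ ≠ 0 := by
      intro hz
      apply h2
      have := congrArg (starRingEnd ℂ) hz
      simp only [map_sub, _root_.map_mul, Complex.conj_conj, Complex.conj_I,
        Complex.conj_ofReal, map_zero] at this
      linear_combination this
    have h2' : (starRingEnd ℂ) l + Complex.I * κ ≠ 0 := by
      intro hz
      apply h1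
      have := congrArg (starRingEnd ℂ) hz
      simp only [map_add, _root_.map_mul, Complex.conj_conj, Complex.conj_I,
        Complex.conj_ofReal, map_zero] at this
      linear_combination this
    have hu' : (starRingEnd ℂ) l = v * ((starRingEnd ℂ) l - Complex.I * κ) := by
      have := congrArg (starRingEnd ℂ) hv
      simp only [_root_.map_mul, map_add, Complex.conj_conj, Complex.conj_I,
        Complex.conj_ofReal, hvr] at this
      linear_combination this
    have hv' : (starRingEnd ℂ) l = u * ((starRingEnd ℂ) l + Complex.I * κ) := by
      have := congrArg (starRingEnd ℂ) hu
      simp only [_root_.map_mul, map_sub, Complex.conj_conj, Complex.conj_I,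
        Complex.conj_ofReal, hur] at this
      linear_combination this
    rw [hΦ]
    simp only
    have e1 : (starRingEnd ℂ) l / ((starRingEnd ℂ) l - Complex.I * κ) = v := by
      rw [div_eq_iff h1']; exact hu'
    have e2 : (starRingEnd ℂ) l / ((starRingEnd ℂ) l + Complex.I * κ) = u := by
      rw [div_eq_iff h2']; exact hv'
    rw [e1, e2]
    simp only [conjTranspose_add, conjTranspose_smul, conjTranspose_one,
      conjTranspose_mul, hCH, ← starRingEnd_apply, hvr, hur]
    rw [Matrix.mul_assoc]
  -- product expansion
  have key : ∀ u v : ℂ,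
      ((1 : Matrix (Fin 3) (Fin 3) ℂ) + u • M + v • (C * M * C)) *
        (1 + v • Mᴴ + u • (C * Mᴴ * C)) =
      1 + u • (M + C * Mᴴ * C) + v • (C * M * C + Mᴴ) +
        (u * v) • (M * Mᴴ + C * (M * Mᴴ) * C) +
        (u * u) • (M * C * Mᴴ * C) + (v * v) • (C * M * C * Mᴴ) := by
    intro u v
    simp only [mul_add, add_mul, one_mul, mul_one, Matrix.smul_mul, Matrix.mul_smul,
      smul_smul, smul_add, Matrix.mul_assoc, hCC2]
    module
  -- the four evaluation points
  have E1 := h (Complex.I * κ * 2)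
    (by intro hz; exact hIκ (by linear_combination hz))
    (by intro hz; exact hIκ (by linear_combination hz / 3))
  have E2 := h (Complex.I * κ * 3)
    (by intro hz; exact hIκ (by linear_combination hz / 2))
    (by intro hz; exact hIκ (by linear_combination hz / 4))
  have E3 := h (Complex.I * κ * (1/2))
    (by intro hz; exact hIκ (by linear_combination -2 * hz))
    (by intro hz; exact hIκ (by linear_combination (2/3) * hz))
  have E4 := h (Complex.I * κ * (1/3))
    (by intro hz; exact hIκ (by linear_combination -(3/2) * hz))
    (by intro hz; exact hIκ (by linear_combination (3/4) * hz))
  rw [hΦval 2 (2/3) _ (by intro hz; exact hIκ (by linear_combination hz)) (by intro hz; exact hIκ (by linear_combination hz / 3)) (by ring) (by ring),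
      hΦconj 2 (2/3) _ (by rw [Complex.conj_eq_iff_im]; simp [Complex.div_im]) (by rw [Complex.conj_eq_iff_im]; simp [Complex.div_im]) (by intro hz; exact hIκ (by linear_combination hz)) (by intro hz; exact hIκ (by linear_combination hz / 3)) (by ring) (by ring),
      key] at E1
  rw [hΦval (3/2) (3/4) _ (by intro hz; exact hIκ (by linear_combination hz / 2)) (by intro hz; exact hIκ (by linear_combination hz / 4)) (by ring) (by ring),
      hΦconj (3/2) (3/4) _ (by rw [Complex.conj_eq_iff_im]; simp [Complex.div_im]) (by rw [Complex.conj_eq_iff_im]; simp [Complex.div_im]) (by intro hz; exact hIκ (by linear_combination hz / 2)) (by intro hz; exact hIκ (by linear_combination hz / 4)) (by ring) (by ring),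
      key] at E2
  rw [hΦval (-1) (1/3) _ (by intro hz; exact hIκ (by linear_combination -2 * hz)) (by intro hz; exact hIκ (by linear_combination (2/3) * hz)) (by ring) (by ring),
      hΦconj (-1) (1/3) _ (by rw [Complex.conj_eq_iff_im]; simp [Complex.div_im]) (by rw [Complex.conj_eq_iff_im]; simp [Complex.div_im]) (by intro hz; exact hIκ (by linear_combination -2 * hz)) (by intro hz; exact hIκ (by linear_combination (2/3) * hz)) (by ring) (by ring),
      key] at E3
  rw [hΦval (-(1/2)) (1/4) _ (by intro hz; exact hIκ (by linear_combination -(3/2) * hz)) (by intro hz; exact hIκ (by linear_combination (3/4) * hz)) (by ring) (by ring),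
      hΦconj (-(1/2)) (1/4) _ (by rw [Complex.conj_eq_iff_im]; simp [Complex.div_im]) (by rw [Complex.conj_eq_iff_im]; simp [Complex.div_im]) (by intro hz; exact hIκ (by linear_combination -(3/2) * hz)) (by intro hz; exact hIκ (by linear_combination (3/4) * hz)) (by ring) (by ring),
      key] at E4
  -- isolate M*C*Mᴴ*C
  have hD : M * C * Mᴴ * C =
      (3/10 : ℂ) • ((1 : Matrix (Fin 3) (Fin 3) ℂ) + (2:ℂ) • (M + C * Mᴴ * C) + ((2:ℂ)/3) • (C * M * C + Mᴴ) +
        ((2:ℂ) * (2/3)) • (M * Mᴴ + C * (M * Mᴴ) * C) + ((2:ℂ) * 2) • (M * C * Mᴴ * C) + ((2:ℂ)/3 * (2/3)) • (C * M * C * Mᴴ)) -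
      (4/15 : ℂ) • ((1 : Matrix (Fin 3) (Fin 3) ℂ) + ((3:ℂ)/2) • (M + C * Mᴴ * C) + ((3:ℂ)/4) • (C * M * C + Mᴴ) +
        ((3:ℂ)/2 * (3/4)) • (M * Mᴴ + C * (M * Mᴴ) * C) + ((3:ℂ)/2 * (3/2)) • (M * C * Mᴴ * C) + ((3:ℂ)/4 * (3/4)) • (C * M * C * Mᴴ)) +
      (3/5 : ℂ) • ((1 : Matrix (Fin 3) (Fin 3) ℂ) + (-1:ℂ) • (M + C * Mᴴ * C) + ((1:ℂ)/3) • (C * M * C + Mᴴ) +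
        ((-1:ℂ) * (1/3)) • (M * Mᴴ + C * (M * Mᴴ) * C) + ((-1:ℂ) * (-1)) • (M * C * Mᴴ * C) + ((1:ℂ)/3 * (1/3)) • (C * M * C * Mᴴ)) -
      (4/5 : ℂ) • ((1 : Matrix (Fin 3) (Fin 3) ℂ) + (-(1/2):ℂ) • (M + C * Mᴴ * C) + ((1:ℂ)/4) • (C * M * C + Mᴴ) +
        ((-(1/2):ℂ) * (1/4)) • (M * Mᴴ + C * (M * Mᴴ) * C) + ((-(1/2):ℂ) * (-(1/2))) • (M * C * Mᴴ * C) + ((1:ℂ)/4 * (1/4)) • (C * M * C * Mᴴ)) +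
      (1/6 : ℂ) • (1 : Matrix (Fin 3) (Fin 3) ℂ) := by
    module
  rw [E1, E2, E3, E4] at hD
  have hD0 : M * C * Mᴴ * C = 0 := by
    rw [hD]; module
  have hMCM : M * C * Mᴴ = 0 := by
    have : M * C * Mᴴ * C * C = 0 * C := by rw [hD0]
    rwa [Matrix.mul_assoc (M * C * Mᴴ) C C, hCC, Matrix.mul_one, Matrix.zero_mul] at this
  refine ⟨hMCM, ?_⟩
  intro n m hn hM
  obtain ⟨i, hi⟩ := Function.ne_iff.mp hn
  have h0 : (M * C * Mᴴ) i i = 0 := by rw [hMCM]; rfl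
  rw [hM, hC] at h0
  simp [Matrix.mul_apply, Matrix.vecMulVec_apply, Matrix.conjTranspose_apply,
    Matrix.diagonal_apply, Fin.sum_univ_three, star_mul', ← starRingEnd_apply,
    Complex.conj_conj] at h0
  have hfac : n i * (starRingEnd ℂ) (n i) *
      ((starRingEnd ℂ) (m 0) * m 0 - (starRingEnd ℂ) (m 1) * m 1 -
        (starRingEnd ℂ) (m 2) * m 2) = 0 := by
    linear_combination h0
  have hni : n i * (starRingEnd ℂ) (n i) ≠ 0 :=
    mul_ne_zero (by simpa using hi) (by simpa using hi)
  have hS : (starRingEnd ℂ) (m 0) * m 0 - (starRingEnd ℂ) (m 1) * m 1 -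
      (starRingEnd ℂ) (m 2) * m 2 = 0 := by
    rcases mul_eq_zero.mp hfac with h' | h'
    · exact absurd h' hni
    · exact h'
  have hnorm : (Complex.normSq (m 0) : ℂ) = Complex.normSq (m 1) + Complex.normSq (m 2) := by
    rw [← Complex.normSq_eq_conj_mul_self, ← Complex.normSq_eq_conj_mul_self,
      ← Complex.normSq_eq_conj_mul_self] at hS
    linear_combination hS
  have hre : Complex.normSq (m 0) = Complex.normSq (m 1) + Complex.normSq (m 2) := by
    exact_mod_cast hnorm
  rw [Complex.sq_norm, Complex.sq_norm, Complex.sq_norm]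
  exact hre
end

section
/- For ω, κ ∈ ℝ with ω ≠ 0, define u₁(x,t) = 0 and v₁(x,t) = exp{4i arctan( κ cos(2ωx + φ) / (ω cosh(2κx + θ)) )} for real constants φ, θ. Then |u₁|² + |v₁|² = 1 and (u₁, v₁) is a stationary solution of the system i u_t + u_{xx} + (u ū_x + v v̄_x)u_x + ∂_x(u ū_x + v v̄_x)u = 0, i v_t + v_{xx} + (u ū_x + v v̄_x)v_x + ∂_x(u ū_x + v v̄_x)v = 0. -/
open Complex

/-- General lemma: for smooth real `α`, `v = exp(4 i α)` with `S = v ⬝ conj v'`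
satisfies the stationary equation. -/
lemma soliton_aux (α : ℝ → ℝ) (hα : ContDiff ℝ (⊤ : ℕ∞) α)
    (v : ℝ → ℂ) (hv : v = fun x => Complex.exp (4 * Complex.I * (α x : ℂ)))
    (S : ℝ → ℂ) (hS : S = fun x => v x * (starRingEnd ℂ) (deriv v x)) :
    (∀ x, ‖v x‖ = 1) ∧
    (∀ x, deriv (deriv v) x + S x * deriv v x + deriv S x * v x = 0) := by
  have hαd : Differentiable ℝ α := hα.differentiable (by simp)
  have hα'd : ContDiff ℝ (⊤ : ℕ∞) (deriv α) := (contDiff_infty_iff_deriv.mp hα).2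
  have habs : ∀ x, ‖v x‖ = 1 := by
    intro x
    rw [hv]
    simp [Complex.norm_exp]
  -- derivative of v
  have hvd : ∀ x, HasDerivAt v (4 * Complex.I * ((deriv α x : ℝ) : ℂ) * v x) x := by
    intro x
    have h1 : HasDerivAt α (deriv α x) x := (hαd x).hasDerivAt
    have h2 : HasDerivAt (fun x => ((α x : ℂ))) (((deriv α x : ℝ) : ℂ)) x := h1.ofReal_comp
    have h3 := (h2.const_mul (4 * Complex.I)).cexp
    rw [hv]
    convert h3 using 1
    beta_reduce
    ring
  have hderiv : deriv v = fun x => 4 * Complex.I * ((deriv α x : ℝ) : ℂ) * v x :=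
    funext fun x => (hvd x).deriv
  -- S = -4 i α'
  have hSval : S = fun x => -(4 * Complex.I * ((deriv α x : ℝ) : ℂ)) := by
    funext x
    have hunit : v x * (starRingEnd ℂ) (v x) = 1 := by
      rw [Complex.mul_conj, Complex.normSq_eq_norm_sq, habs x]
      norm_num
    simp only [hS, hderiv]
    have : v x * (starRingEnd ℂ) (4 * Complex.I * ((deriv α x : ℝ) : ℂ) * v x)
        = -(4 * Complex.I * ((deriv α x : ℝ) : ℂ)) * (v x * (starRingEnd ℂ) (v x)) := by
      simp only [map_mul, Complex.conj_I, Complex.conj_ofReal, map_ofNat]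
      ring
    rw [this, hunit, mul_one]
  -- derivative of S
  have hα'' : ∀ x, HasDerivAt (deriv α) (deriv (deriv α) x) x :=
    fun x => ((hα'd.differentiable (by simp)) x).hasDerivAt
  have hSd : ∀ x, HasDerivAt S (-(4 * Complex.I * ((deriv (deriv α) x : ℝ) : ℂ))) x := by
    intro x
    have h2 : HasDerivAt (fun x => (((deriv α x : ℝ) : ℂ))) (((deriv (deriv α) x : ℝ) : ℂ)) x :=
      (hα'' x).ofReal_comp
    have h3 := ((h2.const_mul (4 * Complex.I)).neg)
    rw [hSval]
    exact h3
  have hderivS : ∀ x, deriv S x = -(4 * Complex.I * ((deriv (deriv α) x : ℝ) : ℂ)) :=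
    fun x => (hSd x).deriv
  -- second derivative of v
  have hvdd : ∀ x, deriv (deriv v) x =
      4 * Complex.I * ((deriv (deriv α) x : ℝ) : ℂ) * v x
      + (4 * Complex.I * ((deriv α x : ℝ) : ℂ)) * (4 * Complex.I * ((deriv α x : ℝ) : ℂ) * v x) := by
    intro x
    have h2 : HasDerivAt (fun x => (((deriv α x : ℝ) : ℂ))) (((deriv (deriv α) x : ℝ) : ℂ)) x :=
      (hα'' x).ofReal_comp
    have hmul : HasDerivAt (fun x => 4 * Complex.I * ((deriv α x : ℝ) : ℂ) * v x)
        (4 * Complex.I * ((deriv (deriv α) x : ℝ) : ℂ) * v x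
          + (4 * Complex.I * ((deriv α x : ℝ) : ℂ)) * (4 * Complex.I * ((deriv α x : ℝ) : ℂ) * v x)) x := by
      have := (h2.const_mul (4 * Complex.I)).mul (hvd x)
      exact this
    rw [hderiv]
    exact hmul.deriv
  refine ⟨habs, fun x => ?_⟩
  rw [hvdd x, hderiv, hderivS, hSval]
  ring

/-- the stationary quadruplet one-soliton `u₁ = 0`,
`v₁ = exp(4i arctan(κ cos(2ωx+φ)/(ω cosh(2κx+θ))))` solves the generalized
Heisenberg ferromagnet system (stationary: `u_t = v_t = 0`) and `|u₁|²+|v₁|²=1`. -/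
theorem stmt10 (ω κ φ θ : ℝ) (hω : ω ≠ 0)
    (u v : ℝ → ℂ) (hu : u = fun _ => 0)
    (hv : v = fun x => Complex.exp (4 * Complex.I *
      (Real.arctan (κ * Real.cos (2 * ω * x + φ) / (ω * Real.cosh (2 * κ * x + θ))) : ℂ)))
    (S : ℝ → ℂ)
    (hS : S = fun x => u x * (starRingEnd ℂ) (deriv u x)
        + v x * (starRingEnd ℂ) (deriv v x)) :
    (∀ x, ‖u x‖ ^ 2 + ‖v x‖ ^ 2 = 1) ∧
    (∀ x, deriv (deriv u) x + S x * deriv u x + deriv S x * u x = 0) ∧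
    (∀ x, deriv (deriv v) x + S x * deriv v x + deriv S x * v x = 0) := by
  subst hu
  have hS' : S = fun x => v x * (starRingEnd ℂ) (deriv v x) := by
    rw [hS]; funext x; simp
  set α : ℝ → ℝ := fun x =>
    Real.arctan (κ * Real.cos (2 * ω * x + φ) / (ω * Real.cosh (2 * κ * x + θ))) with hαdef
  have hαc : ContDiff ℝ (⊤ : ℕ∞) α := by
    apply Real.contDiff_arctan.comp
    apply ContDiff.div
    · exact contDiff_const.mul (Real.contDiff_cos.comp
        ((contDiff_const.mul contDiff_id).add contDiff_const))
    · exact contDiff_const.mul (Real.contDiff_cosh.comp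
        ((contDiff_const.mul contDiff_id).add contDiff_const))
    · intro x
      exact mul_ne_zero hω (Real.cosh_pos _).ne'
  obtain ⟨habs, heq⟩ := soliton_aux α hαc v hv S hS'
  refine ⟨fun x => by simp [habs x], fun x => by simp, heq⟩
end

section
/- Let ω, κ > 0 and define Q(y) = 2ω e^{κy+c} + (ω+iκ) e^{−κy−c} for real y and constant c ∈ ℝ. Then Q(y) ≠ 0 for all y ∈ ℝ, and the functions u₁ = 4iωκ Q̄ e^{iφ}/((ω−iκ)Q²) and v₁ = 1 − 8ωκ²/((ω−iκ)Q²) satisfy |u₁|² + |v₁|² = 1 for any real phase φ. -/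
open Complex

/-- `Q(y) = 2ω e^{κy+c} + (ω+iκ) e^{-κy-c}` never vanishes, and the
traveling-wave quadruplet soliton `(u₁, v₁)` built from it satisfies
`|u₁|² + |v₁|² = 1`. -/
theorem stmt12 (ω κ c φ : ℝ) (hω : 0 < ω) (hκ : 0 < κ)
    (Q : ℝ → ℂ)
    (hQ : Q = fun y => 2 * ω * Real.exp (κ * y + c)
      + ((ω : ℂ) + Complex.I * κ) * Real.exp (-(κ * y) - c))
    (u₁ v₁ : ℝ → ℂ)
    (hu : u₁ = fun y => 4 * Complex.I * ω * κ * (starRingEnd ℂ) (Q y) *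
      Complex.exp (Complex.I * φ) / (((ω : ℂ) - Complex.I * κ) * Q y ^ 2))
    (hv : v₁ = fun y => 1 - 8 * ω * κ ^ 2 / (((ω : ℂ) - Complex.I * κ) * Q y ^ 2)) :
    (∀ y : ℝ, Q y ≠ 0) ∧
    (∀ y : ℝ, ‖u₁ y‖ ^ 2 + ‖v₁ y‖ ^ 2 = 1) := by
  have hQne : ∀ y : ℝ, Q y ≠ 0 := by
    intro y
    have ha : 0 < Real.exp (κ * y + c) := Real.exp_pos _
    have hb : 0 < Real.exp (-(κ * y) - c) := Real.exp_pos _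
    have hre : (Q y).re = 2 * ω * Real.exp (κ * y + c) + ω * Real.exp (-(κ * y) - c) := by
      simp only [hQ, Complex.add_re, Complex.add_im, Complex.mul_re, Complex.mul_im,
        Complex.ofReal_re, Complex.ofReal_im, Complex.I_re, Complex.I_im,
        Complex.re_ofNat, Complex.im_ofNat]
      ring
    intro h
    rw [h] at hre
    simp at hre
    nlinarith
  refine ⟨hQne, fun y => ?_⟩
  have ha : Real.exp (κ * y + c) > 0 := Real.exp_pos _
  have hb : Real.exp (-(κ * y) - c) > 0 := Real.exp_pos _
  set a := Real.exp (κ * y + c) with hadef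
  set b := Real.exp (-(κ * y) - c) with hbdef
  have hab : a * b = 1 := by
    rw [hadef, hbdef, ← Real.exp_add]; ring_nf; exact Real.exp_zero
  have hre : (Q y).re = 2 * ω * a + ω * b := by
    simp only [hQ, Complex.add_re, Complex.add_im, Complex.mul_re, Complex.mul_im,
      Complex.ofReal_re, Complex.ofReal_im, Complex.I_re, Complex.I_im,
        Complex.re_ofNat, Complex.im_ofNat]
    ring
  have him : (Q y).im = κ * b := by
    simp only [hQ, Complex.add_re, Complex.add_im, Complex.mul_re, Complex.mul_im,
      Complex.ofReal_re, Complex.ofReal_im, Complex.I_re, Complex.I_im,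
        Complex.re_ofNat, Complex.im_ofNat]
    ring
  have hωκ : ((ω : ℂ) - Complex.I * κ) ≠ 0 := by
    intro h
    have := congrArg Complex.re h
    simp [Complex.sub_re, Complex.mul_re] at this
    linarith
  have hD : ((ω : ℂ) - Complex.I * κ) * Q y ^ 2 ≠ 0 :=
    mul_ne_zero hωκ (pow_ne_zero _ (hQne y))
  have hDn : Complex.normSq (((ω : ℂ) - Complex.I * κ) * Q y ^ 2) ≠ 0 := by
    simpa using hD
  have key : Complex.normSq (4 * Complex.I * ω * κ * (starRingEnd ℂ) (Q y) *
      Complex.exp (Complex.I * φ))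
      + Complex.normSq ((((ω : ℂ) - Complex.I * κ) * Q y ^ 2) - 8 * ω * κ ^ 2)
      = Complex.normSq (((ω : ℂ) - Complex.I * κ) * Q y ^ 2) := by
    have he : Complex.normSq (Complex.exp (Complex.I * φ)) = 1 := by
      rw [Complex.normSq_eq_norm_sq, Complex.norm_exp]
      simp
    simp only [Complex.normSq_apply, Complex.mul_re, Complex.mul_im, Complex.sub_re,
      Complex.sub_im, Complex.I_re, Complex.I_im, Complex.ofReal_re, Complex.ofReal_im,
      Complex.conj_re, Complex.conj_im, pow_two, hre, him,
      Complex.re_ofNat, Complex.im_ofNat, Complex.one_re, Complex.one_im] at he ⊢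
    linear_combination (16*ω^2*κ^2*((2*ω*a+ω*b)*(2*ω*a+ω*b)+(κ*b)*(κ*b))) * he
      - 64*ω^2*κ^4 * hab
  have h1 : ‖u₁ y‖ ^ 2 = Complex.normSq (4 * Complex.I * ω * κ *
      (starRingEnd ℂ) (Q y) * Complex.exp (Complex.I * φ)) /
      Complex.normSq (((ω : ℂ) - Complex.I * κ) * Q y ^ 2) := by
    rw [hu]
    simp only [norm_div, map_div₀, div_pow, Complex.sq_norm]
  have h2 : ‖v₁ y‖ ^ 2 = Complex.normSq
      ((((ω : ℂ) - Complex.I * κ) * Q y ^ 2) - 8 * ω * κ ^ 2) /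
      Complex.normSq (((ω : ℂ) - Complex.I * κ) * Q y ^ 2) := by
    rw [hv]
    have : (1 : ℂ) - 8 * ω * κ ^ 2 / (((ω : ℂ) - Complex.I * κ) * Q y ^ 2)
        = ((((ω : ℂ) - Complex.I * κ) * Q y ^ 2) - 8 * ω * κ ^ 2) /
          (((ω : ℂ) - Complex.I * κ) * Q y ^ 2) := by
      rw [sub_div, div_self hD]
    simp only [this, norm_div, map_div₀, div_pow, Complex.sq_norm]
  rw [h1, h2, ← add_div, key, div_self hDn]
end

section
/- Let κ, σ₀ ∈ ℝ, κ ≠ 0, and σ(t) = σ₀ − 2κ²t. The function x ↦ |u₁(x,t)|² with u₁ given by the doublet soliton formula u₁ = 2(cosh²(κx) + iσ(t)) e^{iθ} sinh(κx)/(cosh²(κx) − iσ(t))² (θ real) attains its maxima at the points x = ±ξ₀(t) where cosh²(κ ξ₀) = 1 + √(1+σ(t)²), i.e. ξ₀(t) = (1/κ) ln( √(1+√(1+σ²)) + (1+σ²)^{1/4} ); equivalently, d/dx |u₁(x,t)|² = 0 at x = ξ₀(t) and ξ₀ satisfies sinh²(κξ₀) = √(1+σ(t)²). -/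
open Complex

private lemma stmt19_aux (A s : ℝ) (hA : 1 ≤ A) (hs : 0 ≤ s) :
    4 * s * ((1 + A) ^ 2 + (A ^ 2 - 1)) ≤ 4 * A * ((s + 1) ^ 2 + (A ^ 2 - 1)) := by
  nlinarith [mul_nonneg (by linarith : (0:ℝ) ≤ A) (sq_nonneg (s - A))]

/-- the doublet-soliton amplitude `|u₁(·,t)|²` attains its maxima
at `x = ±ξ₀(t)`, where `ξ₀(t) = (1/κ) ln(√(1+√(1+σ²)) + (1+σ²)^{1/4})` with
`σ(t) = σ₀ - 2κ²t`; equivalently `sinh²(κξ₀) = √(1+σ²)`,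
`cosh²(κξ₀) = 1 + √(1+σ²)` and `d/dx |u₁|²` vanishes at `ξ₀`. -/
theorem stmt19 (κ σ₀ θ t : ℝ) (hκ : κ ≠ 0)
    (σ : ℝ) (hσ : σ = σ₀ - 2 * κ ^ 2 * t)
    (u₁ : ℝ → ℂ)
    (hu : u₁ = fun x => 2 * (((Real.cosh (κ * x) : ℂ)) ^ 2 + Complex.I * σ) *
      Complex.exp (Complex.I * θ) * (Real.sinh (κ * x) : ℂ) /
      (((Real.cosh (κ * x) : ℂ)) ^ 2 - Complex.I * σ) ^ 2)
    (ξ₀ : ℝ)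
    (hξ : ξ₀ = (1 / κ) * Real.log
      (Real.sqrt (1 + Real.sqrt (1 + σ ^ 2)) + (1 + σ ^ 2) ^ ((1 : ℝ) / 4))) :
    Real.sinh (κ * ξ₀) ^ 2 = Real.sqrt (1 + σ ^ 2) ∧
    Real.cosh (κ * ξ₀) ^ 2 = 1 + Real.sqrt (1 + σ ^ 2) ∧
    deriv (fun x => ‖u₁ x‖ ^ 2) ξ₀ = 0 ∧
    (∀ x : ℝ, ‖u₁ x‖ ^ 2 ≤ ‖u₁ ξ₀‖ ^ 2) ∧
    ‖u₁ (-ξ₀)‖ ^ 2 = ‖u₁ ξ₀‖ ^ 2 := by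
  have hA0 : (0:ℝ) ≤ 1 + σ ^ 2 := by positivity
  set A := Real.sqrt (1 + σ ^ 2) with hAdef
  have hA2 : A ^ 2 = 1 + σ ^ 2 := Real.sq_sqrt hA0
  have hA1 : 1 ≤ A := by nlinarith [Real.sqrt_nonneg (1 + σ ^ 2)]
  set b := (1 + σ ^ 2) ^ ((1:ℝ)/4) with hbdef
  have hb0 : 0 ≤ b := Real.rpow_nonneg hA0 _
  have hb2 : b ^ 2 = A := by
    rw [hbdef, hAdef, ← Real.rpow_natCast ((1 + σ ^ 2) ^ ((1:ℝ)/4)) 2,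
      ← Real.rpow_mul hA0, Real.sqrt_eq_rpow]
    norm_num
  set a := Real.sqrt (1 + A) with hadef
  have ha0 : 0 ≤ a := Real.sqrt_nonneg _
  have ha2 : a ^ 2 = 1 + A := Real.sq_sqrt (by linarith)
  have hab : 0 < a + b := by nlinarith
  have hexp : Real.exp (κ * ξ₀) = a + b := by
    rw [hξ, show κ * (1 / κ * Real.log (a + b)) = Real.log (a + b) by
      field_simp]
    exact Real.exp_log hab
  have hinv : (a + b) * (a - b) = 1 := by nlinarith
  have hexpneg : Real.exp (-(κ * ξ₀)) = a - b := by
    rw [Real.exp_neg, hexp]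
    rw [inv_eq_iff_eq_inv, eq_comm, inv_eq_iff_eq_inv]
    field_simp
    linarith [hinv]
  have hsinh : Real.sinh (κ * ξ₀) = b := by
    rw [Real.sinh_eq, hexp, hexpneg]; ring
  have hcosh : Real.cosh (κ * ξ₀) = a := by
    rw [Real.cosh_eq, hexp, hexpneg]; ring
  have hs2 : Real.sinh (κ * ξ₀) ^ 2 = A := by rw [hsinh, hb2]
  have hc2 : Real.cosh (κ * ξ₀) ^ 2 = 1 + A := by rw [hcosh, ha2]
  clear_value A b a
  have hdenpos : ∀ x : ℝ, (0:ℝ) < (Real.cosh (κ * x) ^ 2) ^ 2 + σ ^ 2 := by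
    intro x
    have h := Real.one_le_cosh (κ * x)
    have h2 : 1 ≤ Real.cosh (κ * x) ^ 2 := by nlinarith
    have h4 : 1 ≤ (Real.cosh (κ * x) ^ 2) ^ 2 := by nlinarith
    linarith [sq_nonneg σ]
  have key : ∀ x : ℝ, ‖u₁ x‖ ^ 2
      = 4 * Real.sinh (κ * x) ^ 2 / ((Real.cosh (κ * x) ^ 2) ^ 2 + σ ^ 2) := by
    intro x
    have h1 : ‖(Real.cosh (κ * x) : ℂ) ^ 2 + Complex.I * σ‖ ^ 2
        = (Real.cosh (κ * x) ^ 2) ^ 2 + σ ^ 2 := by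
      rw [Complex.sq_norm, show ((Real.cosh (κ * x) : ℂ)) ^ 2 + Complex.I * σ
        = ((Real.cosh (κ * x) ^ 2 : ℝ) : ℂ) + (σ : ℝ) * Complex.I by push_cast; ring,
        Complex.normSq_add_mul_I]
    have h2 : ‖(Real.cosh (κ * x) : ℂ) ^ 2 - Complex.I * σ‖ ^ 2
        = (Real.cosh (κ * x) ^ 2) ^ 2 + σ ^ 2 := by
      rw [Complex.sq_norm, show ((Real.cosh (κ * x) : ℂ)) ^ 2 - Complex.I * σ
        = ((Real.cosh (κ * x) ^ 2 : ℝ) : ℂ) + ((-σ : ℝ)) * Complex.I by push_cast; ring,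
        Complex.normSq_add_mul_I, neg_sq]
    have h3 : ‖Complex.exp (Complex.I * θ)‖ = 1 := by
      rw [Complex.norm_exp]
      simp
    rw [hu]
    simp only [norm_div, norm_mul, norm_pow, div_pow, mul_pow, h1, h2, h3]
    rw [Complex.norm_two, Complex.norm_real, Real.norm_eq_abs, _root_.sq_abs]
    rw [div_eq_div_iff (pow_pos (hdenpos x) 2).ne' (hdenpos x).ne']
    ring
  have hmax : ∀ x : ℝ, ‖u₁ x‖ ^ 2 ≤ ‖u₁ ξ₀‖ ^ 2 := by
    intro x
    rw [key, key, hs2, hc2]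
    rw [div_le_div_iff₀ (hdenpos x) (by nlinarith)]
    have hcs : Real.cosh (κ * x) ^ 2 = Real.sinh (κ * x) ^ 2 + 1 :=
      Real.cosh_sq (κ * x)
    rw [hcs]
    have hσ2 : σ ^ 2 = A ^ 2 - 1 := by linarith
    rw [hσ2]
    have h := stmt19_aux A (Real.sinh (κ * x) ^ 2) hA1 (sq_nonneg _)
    linarith
  refine ⟨hs2, hc2, ?_, hmax, ?_⟩
  · exact IsLocalMax.deriv_eq_zero (Filter.Eventually.of_forall hmax)
  · rw [key, key]
    simp [mul_neg, Real.sinh_neg, Real.cosh_neg]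
end
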